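/- The Laplace transform of the generalized delay Mittag-Leffler function G_{α,β}^{λ,τ,m}(t) = Σ_{j=0}^∞ C(j+m, j) λ^j (t - (m+j)τ)^{α(m+j)+β-1} / Γ(α(m+j)+β) · H(t - (m+j)τ) equals s^{α-β} e^{-msτ} / (s^α - λ e^{-sτ})^{m+1} for s > 0 sufficiently large. -/

import Mathlib

open Real MeasureTheory Set

lemma aux_integrable17 {p s : ℝ} (hp : 0 < p) (hs : 0 < s) :
    IntegrableOn (fun t : ℝ => t ^ (p - 1) * Real.exp (-(s * t))) (Ioi 0) := by
  have h0 : IntegrableOn (fun x : ℝ => Real.exp (-(s * x)) * (s * x) ^ (p - 1)) (Ioi 0) := by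
    have := (integrableOn_Ioi_comp_mul_left_iff
      (fun x : ℝ => Real.exp (-x) * x ^ (p - 1)) 0 hs).mpr
      (by simpa using Real.GammaIntegral_convergent hp)
    simpa using this
  have h1 : IntegrableOn (fun x : ℝ =>
      s ^ (-(p-1)) * (Real.exp (-(s * x)) * (s * x) ^ (p - 1))) (Ioi 0) := h0.const_mul _
  refine IntegrableOn.congr_fun h1 (fun x hx => ?_) measurableSet_Ioi
  have hx0 : (0:ℝ) < x := hx
  have hsp : (s:ℝ) ^ (p-1) ≠ 0 := (Real.rpow_pos_of_pos hs _).ne'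
  rw [Real.mul_rpow hs.le hx0.le, Real.rpow_neg hs.le]
  field_simp

lemma lap_term17 {s a p : ℝ} (hs : 0 < s) (ha : 0 ≤ a) (hp : 0 < p) :
    IntegrableOn (fun t : ℝ => Real.exp (-(s * t)) * (t - a) ^ (p - 1) *
        (if 0 ≤ t - a then (1:ℝ) else 0)) (Ioi 0) ∧
    (∫ t in Ioi (0:ℝ), Real.exp (-(s * t)) * (t - a) ^ (p - 1) *
        (if 0 ≤ t - a then (1:ℝ) else 0))
      = Real.exp (-(s * a)) * ((1 / s) ^ p * Real.Gamma p) := by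
  have hind : (fun t : ℝ => Real.exp (-(s * t)) * (t - a) ^ (p - 1) *
      (if 0 ≤ t - a then (1:ℝ) else 0))
      = (Ici a).indicator (fun t : ℝ => Real.exp (-(s * t)) * (t - a) ^ (p - 1)) := by
    funext t
    by_cases h : a ≤ t
    · rw [indicator_of_mem (mem_Ici.mpr h), if_pos (sub_nonneg.mpr h), mul_one]
    · rw [indicator_of_notMem (fun hc => h (mem_Ici.mp hc)),
        if_neg (fun hc => h (sub_nonneg.mp hc)), mul_zero]
  have hFcomp : ∀ t ∈ Ioi (0:ℝ),
      Real.exp (-(s * (t + a))) * (t + a - a) ^ (p - 1)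
        = Real.exp (-(s*a)) * (t ^ (p - 1) * Real.exp (-(s * t))) := by
    intro t _
    rw [add_sub_cancel_right, show -(s * (t + a)) = -(s*t) + -(s*a) by ring, Real.exp_add]
    ring
  have hFIoiA : IntegrableOn (fun t : ℝ => Real.exp (-(s * t)) * (t - a) ^ (p - 1)) (Ioi a) := by
    have h2 := ((measurePreserving_add_right (volume : Measure ℝ) a).restrict_preimage_emb
      (measurableEmbedding_addRight a) (Ioi a)).integrable_comp_emb
      (measurableEmbedding_addRight a)
      (g := fun t : ℝ => Real.exp (-(s * t)) * (t - a) ^ (p - 1))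
    rw [IntegrableOn, ← h2]
    have hpre : (fun x : ℝ => x + a) ⁻¹' Ioi a = Ioi 0 := by simp
    rw [hpre]
    exact IntegrableOn.congr_fun ((aux_integrable17 hp hs).const_mul (Real.exp (-(s*a))))
      (fun t ht => (hFcomp t ht).symm) measurableSet_Ioi
  have hFIciA : IntegrableOn (fun t : ℝ => Real.exp (-(s * t)) * (t - a) ^ (p - 1)) (Ici a) :=
    hFIoiA.congr_set_ae Ioi_ae_eq_Ici.symm
  constructor
  · rw [hind, IntegrableOn, integrable_indicator_iff measurableSet_Ici]
    exact hFIciA.restrict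
  · rw [hind, setIntegral_indicator measurableSet_Ici]
    have key : (∫ t in Ioi a, Real.exp (-(s * t)) * (t - a) ^ (p - 1))
        = Real.exp (-(s * a)) * ((1 / s) ^ p * Real.Gamma p) := by
      have htr := (measurePreserving_add_right (volume : Measure ℝ) a).setIntegral_preimage_emb
        (measurableEmbedding_addRight a)
        (fun t : ℝ => Real.exp (-(s * t)) * (t - a) ^ (p - 1)) (Ioi a)
      have hpre : (fun x : ℝ => x + a) ⁻¹' Ioi a = Ioi 0 := by simp
      rw [hpre] at htr
      rw [← htr, setIntegral_congr_fun measurableSet_Ioi hFcomp, integral_const_mul,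
        integral_rpow_mul_exp_neg_mul_Ioi hp hs]
    rcases eq_or_lt_of_le ha with h | h
    · rw [show Ioi (0:ℝ) ∩ Ici a = Ioi a by
        rw [← h]; exact inter_eq_left.mpr Ioi_subset_Ici_self, key]
    · rw [show Ioi (0:ℝ) ∩ Ici a = Ici a from
        inter_eq_right.mpr (fun x hx => lt_of_lt_of_le h hx),
        integral_Ici_eq_integral_Ioi, key]

/-- The complex Laplace-transform term. -/
noncomputable def Fc17 (s a p : ℝ) (C : ℂ) : ℝ → ℂ := fun t =>
  C / (Real.Gamma p : ℂ) *
    ((Real.exp (-(s*t)) * (t-a) ^ (p-1) * (if 0 ≤ t-a then (1:ℝ) else 0) : ℝ) : ℂ)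

lemma lap_termC17 {s a p : ℝ} (hs : 0 < s) (ha : 0 ≤ a) (hp : 0 < p) (C : ℂ) :
    Integrable (Fc17 s a p C) (volume.restrict (Ioi 0)) ∧
    (∫ t in Ioi (0:ℝ), Fc17 s a p C t) = C * ((Real.exp (-(s*a)) * (1/s) ^ p : ℝ) : ℂ) ∧
    (∫ t in Ioi (0:ℝ), ‖Fc17 s a p C t‖) = ‖C‖ * (Real.exp (-(s*a)) * (1/s) ^ p) := by
  have hΓ : 0 < Real.Gamma p := Real.Gamma_pos_of_pos hp
  obtain ⟨hint, hval⟩ := lap_term17 hs ha hp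
  have hnonneg : ∀ t : ℝ, 0 ≤ Real.exp (-(s*t)) * (t-a) ^ (p-1)
      * (if 0 ≤ t-a then (1:ℝ) else 0) := by
    intro t
    by_cases h : 0 ≤ t - a
    · rw [if_pos h, mul_one]
      exact mul_nonneg (Real.exp_nonneg _) (Real.rpow_nonneg h _)
    · rw [if_neg h, mul_zero]
  have h1 : Integrable (Fc17 s a p C) (volume.restrict (Ioi 0)) := by
    unfold Fc17
    exact (hint.ofReal (𝕜 := ℂ)).const_mul _
  refine ⟨h1, ?_, ?_⟩
  · unfold Fc17
    have hcast : (∫ t in Ioi (0:ℝ), ((Real.exp (-(s*t)) * (t-a) ^ (p-1) *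
          (if 0 ≤ t-a then (1:ℝ) else 0) : ℝ) : ℂ))
        = ((∫ t in Ioi (0:ℝ), Real.exp (-(s*t)) * (t-a) ^ (p-1) *
          (if 0 ≤ t-a then (1:ℝ) else 0) : ℝ) : ℂ) := integral_ofReal
    rw [integral_const_mul, hcast, hval]
    push_cast
    have : (Real.Gamma p : ℂ) ≠ 0 := by exact_mod_cast hΓ.ne'
    field_simp
  · have hnn : ∀ t : ℝ, ‖Fc17 s a p C t‖ = (‖C‖ / Real.Gamma p) *
        (Real.exp (-(s*t)) * (t-a) ^ (p-1) * (if 0 ≤ t-a then (1:ℝ) else 0)) := by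
      intro t
      unfold Fc17
      rw [norm_mul, norm_div, Complex.norm_real, Complex.norm_real,
        Real.norm_eq_abs, Real.norm_eq_abs, abs_of_pos hΓ, abs_of_nonneg (hnonneg t)]
    simp only [hnn]
    rw [integral_const_mul, hval]
    field_simp

lemma Fc17_def (s a p : ℝ) (C : ℂ) : Fc17 s a p C = fun t =>
  C / (Real.Gamma p : ℂ) *
    ((Real.exp (-(s*t)) * (t-a) ^ (p-1) * (if 0 ≤ t-a then (1:ℝ) else 0) : ℝ) : ℂ) := rfl

/-- The Laplace transform of the generalized delay Mittag–Leffler function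
`G_{α,β}^{λ,τ,m}` equals `s^{α-β} e^{-msτ} / (s^α - λ e^{-sτ})^{m+1}` for `s > 0`
sufficiently large. -/
theorem stmt_17 (α β τ : ℝ) (hα : 0 < α) (hβ : 0 < β) (hτ : 0 ≤ τ)
    (lam : ℂ) (m : ℕ) (H : ℝ → ℝ) (hH : ∀ z, H z = if 0 ≤ z then 1 else 0)
    (G : ℝ → ℂ)
    (hG : ∀ t, G t = ∑' j : ℕ, ((j + m).choose j : ℂ) * lam ^ j *
        ((((t - (m + j) * τ) ^ (α * (m + j) + β - 1) : ℝ) : ℂ) /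
          ((Real.Gamma (α * (m + j) + β) : ℝ) : ℂ)) * (H (t - (m + j) * τ) : ℂ)) :
    ∀ s : ℝ, 0 < s → ‖lam‖ * Real.exp (-(s * τ)) < s ^ α →
      (∫ t in Set.Ioi (0 : ℝ), Complex.exp (-(s * t)) * G t) =
        (((s ^ (α - β) : ℝ) : ℂ) * ((Real.exp (-(m * s * τ)) : ℝ) : ℂ)) /
          (((s ^ α : ℝ) : ℂ) - lam * ((Real.exp (-(s * τ)) : ℝ) : ℂ)) ^ (m + 1) := by
  intro s hs hlt
  have hsα : (0:ℝ) < s ^ α := Real.rpow_pos_of_pos hs α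
  have hA0 : ∀ j : ℕ, 0 ≤ ((m:ℝ) + j) * τ := fun j => mul_nonneg (by positivity) hτ
  have hP0 : ∀ j : ℕ, 0 < α * ((m:ℝ) + j) + β := fun j => by positivity
  -- Step 1 : integrand rewrite
  have step1 : ∀ t : ℝ, Complex.exp (-(s * t)) * G t
      = ∑' j : ℕ, Fc17 s (((m:ℝ)+j)*τ) (α*((m:ℝ)+j)+β)
          (((j + m).choose j : ℂ) * lam ^ j) t := by
    intro t
    rw [hG t, ← tsum_mul_left]
    refine tsum_congr fun j => ?_
    rw [Fc17_def, hH]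
    have hexp : Complex.exp (-(s * t)) = ((Real.exp (-(s * t)) : ℝ) : ℂ) := by
      rw [Complex.ofReal_exp]
      norm_num
    rw [hexp]
    push_cast
    ring
  -- per-term facts
  have hterm := fun j : ℕ => lap_termC17 (s := s) hs (hA0 j) (hP0 j)
    (((j + m).choose j : ℂ) * lam ^ j)
  have hnormC : ∀ j : ℕ, ‖(((j + m).choose j : ℂ) * lam ^ j)‖
      = ((j + m).choose j : ℝ) * ‖lam‖ ^ j := fun j => by
    rw [norm_mul, norm_pow, Complex.norm_natCast]
  have hchoose : ∀ j : ℕ, (j + m).choose j = (j + m).choose m := fun j => by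
    have h := Nat.choose_symm (Nat.le_add_left m j)
    rwa [Nat.add_sub_cancel] at h
  have hone_div : ((1:ℝ)/s) ^ α = (s ^ α)⁻¹ := by
    rw [one_div, Real.inv_rpow hs.le]
  have hrlt : ‖lam‖ * Real.exp (-(s * τ)) * ((1:ℝ)/s) ^ α < 1 := by
    rw [hone_div, ← div_eq_mul_inv, div_lt_one hsα]
    simpa using hlt
  have hrnn : 0 ≤ ‖lam‖ * Real.exp (-(s * τ)) * ((1:ℝ)/s) ^ α := by positivity
  have hsummable_r : Summable (fun j : ℕ => ((j + m).choose m : ℝ) *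
      (‖lam‖ * Real.exp (-(s * τ)) * ((1:ℝ)/s) ^ α) ^ j) :=
    summable_choose_mul_geometric_of_norm_lt_one m
      (by rwa [Real.norm_eq_abs, abs_of_nonneg hrnn])
  have hexpA : ∀ j : ℕ, Real.exp (-(s * (((m:ℝ)+j)*τ)))
      = Real.exp (-(s * ((m:ℝ)*τ))) * (Real.exp (-(s*τ)))^j := fun j => by
    rw [← Real.exp_nat_mul, ← Real.exp_add]
    congr 1
    ring
  have hpowP : ∀ j : ℕ, ((1:ℝ)/s) ^ (α*((m:ℝ)+j)+β)
      = ((1:ℝ)/s) ^ (α*(m:ℝ)+β) * (((1:ℝ)/s) ^ α)^j := fun j => by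
    rw [← Real.rpow_natCast (((1:ℝ)/s) ^ α) j,
      ← Real.rpow_mul (by positivity : (0:ℝ) ≤ 1/s),
      ← Real.rpow_add (by positivity : (0:ℝ) < 1/s)]
    congr 1
    ring
  have hnorm_int : ∀ j : ℕ, (∫ t in Ioi (0:ℝ), ‖Fc17 s (((m:ℝ)+j)*τ) (α*((m:ℝ)+j)+β)
        (((j + m).choose j : ℂ) * lam ^ j) t‖)
      = (Real.exp (-(s * ((m:ℝ)*τ))) * ((1:ℝ)/s) ^ (α*(m:ℝ)+β)) *
        (((j + m).choose m : ℝ) * (‖lam‖ * Real.exp (-(s*τ)) * ((1:ℝ)/s)^α)^j) := fun j => by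
    rw [(hterm j).2.2, hnormC j, hchoose j, hexpA j, hpowP j, mul_pow, mul_pow]
    ring
  have hsum_norm : Summable (fun j : ℕ => ∫ t in Ioi (0:ℝ),
      ‖Fc17 s (((m:ℝ)+j)*τ) (α*((m:ℝ)+j)+β) (((j + m).choose j : ℂ) * lam ^ j) t‖) :=
    (hsummable_r.mul_left _).congr (fun j => (hnorm_int j).symm)
  -- swap integral and sum
  have hswap : (∫ t in Ioi (0:ℝ), Complex.exp (-(s * t)) * G t)
      = ∑' j : ℕ, ∫ t in Ioi (0:ℝ), Fc17 s (((m:ℝ)+j)*τ) (α*((m:ℝ)+j)+β)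
          (((j + m).choose j : ℂ) * lam ^ j) t := by
    rw [integral_congr_ae (Filter.Eventually.of_forall fun t => step1 t)]
    exact (integral_tsum_of_summable_integral_norm (fun j => (hterm j).1) hsum_norm).symm
  rw [hswap]
  -- evaluate the sum
  have hx : ‖lam * ((Real.exp (-(s*τ)) : ℝ) : ℂ) * ((((1:ℝ)/s) ^ α : ℝ) : ℂ)‖ < 1 := by
    rw [norm_mul, norm_mul, Complex.norm_real, Complex.norm_real,
      Real.norm_eq_abs, Real.norm_eq_abs, abs_of_nonneg (Real.exp_nonneg _),
      abs_of_nonneg (Real.rpow_nonneg (by positivity) _)]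
    exact hrlt
  have hval : ∀ j : ℕ, (∫ t in Ioi (0:ℝ), Fc17 s (((m:ℝ)+j)*τ) (α*((m:ℝ)+j)+β)
        (((j + m).choose j : ℂ) * lam ^ j) t)
      = ((Real.exp (-(s * ((m:ℝ)*τ))) * ((1:ℝ)/s) ^ (α*(m:ℝ)+β) : ℝ) : ℂ) *
        (((j + m).choose m : ℂ) *
          (lam * ((Real.exp (-(s*τ)) : ℝ) : ℂ) * ((((1:ℝ)/s) ^ α : ℝ) : ℂ)) ^ j) := fun j => by
    rw [(hterm j).2.1, hchoose j, hexpA j, hpowP j]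
    push_cast
    ring
  rw [tsum_congr hval, tsum_mul_left, tsum_choose_mul_geometric_of_norm_lt_one m hx]
  -- final algebra
  have hsc : ((s^α : ℝ) : ℂ) ≠ 0 := by
    exact_mod_cast hsα.ne'
  have hD : ((s^α : ℝ) : ℂ) - lam * ((Real.exp (-(s*τ)) : ℝ) : ℂ) ≠ 0 := by
    intro h
    rw [sub_eq_zero] at h
    have hnorm := congrArg norm h
    rw [Complex.norm_real, Real.norm_eq_abs, abs_of_pos hsα, norm_mul,
      Complex.norm_real, Real.norm_eq_abs, abs_of_nonneg (Real.exp_nonneg _)] at hnorm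
    exact absurd hnorm (ne_of_gt hlt)
  have h1mx : (1 : ℂ) - lam * ((Real.exp (-(s*τ)) : ℝ) : ℂ) * ((((1:ℝ)/s) ^ α : ℝ) : ℂ)
      = (((s^α : ℝ) : ℂ) - lam * ((Real.exp (-(s*τ)) : ℝ) : ℂ)) * (((s^α : ℝ) : ℂ))⁻¹ := by
    rw [hone_div]
    push_cast
    field_simp
  have hreal : ((1:ℝ)/s) ^ (α*(m:ℝ)+β) * (s^α)^(m+1) = s^(α-β) := by
    rw [← Real.rpow_natCast (s^α) (m+1), ← Real.rpow_mul hs.le, one_div,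
      Real.inv_rpow hs.le, ← Real.rpow_neg hs.le, ← Real.rpow_add hs]
    congr 1
    push_cast
    ring
  have hexpm : Real.exp (-(s * ((m:ℝ)*τ))) = Real.exp (-((m:ℝ)*s*τ)) := by
    rw [show -(s * ((m:ℝ)*τ)) = -((m:ℝ)*s*τ) by ring]
  have hKc : ((Real.exp (-(s * ((m:ℝ)*τ))) * ((1:ℝ)/s) ^ (α*(m:ℝ)+β) : ℝ) : ℂ) *
      ((s^α : ℝ) : ℂ)^(m+1)
      = ((s ^ (α - β) : ℝ) : ℂ) * ((Real.exp (-((m:ℝ) * s * τ)) : ℝ) : ℂ) := by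
    rw [← Complex.ofReal_pow, ← Complex.ofReal_mul, ← Complex.ofReal_mul]
    congr 1
    rw [mul_assoc, hreal, hexpm]
    ring
  rw [h1mx, mul_pow, inv_pow]
  have hfrac : (1:ℂ) / ((((s^α : ℝ) : ℂ) - lam * ((Real.exp (-(s*τ)) : ℝ) : ℂ)) ^ (m+1) *
        (((s^α : ℝ) : ℂ) ^ (m+1))⁻¹)
      = ((s^α : ℝ) : ℂ) ^ (m+1) /
        ((((s^α : ℝ) : ℂ) - lam * ((Real.exp (-(s*τ)) : ℝ) : ℂ)) ^ (m+1)) := by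
    rw [one_div, mul_inv, inv_inv]
    rw [div_eq_mul_inv, mul_comm]
  rw [hfrac, ← mul_div_assoc, hKc]
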